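/- Left reduction relation for the twisted transfer matrix: suppose n ≥ 2 and let 𝐭*'(ζ) denote the twisted transfer matrix on the last n−1 sites (built from the inhomogeneities ξ₂,…,ξ_n and the same w). Then for every X ∈ End((K²)^{⊗(n−1)}), regarded as acting on sites 2,…,n, one has 𝐭*(ζ)( diag(w,w⁻¹)₁ ⊗ X ) = diag(w,w⁻¹)₁ ⊗ 𝐭*'(ζ)(X). -/

import Mathlib

noncomputable section

open Matrix

/-- Entries of the six-vertex L-matrix `L°(η)` (first pair of indices: output
(auxiliary, site) indices; second pair: input indices). -/
def sixvE {K : Type*} [Field K] (q η : K) (a b a' b' : Fin 2) : K :=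
  if a = a' ∧ b = b' then (if a = b then 1 else (η - η⁻¹) / (q * η - q⁻¹ * η⁻¹))
  else if a = b' ∧ b = a' then (q - q⁻¹) / (q * η - q⁻¹ * η⁻¹) else 0

/-- The six-vertex L-matrix `L°_{a,i}(η)` acting on the auxiliary two-dimensional
space and the `i`-th site of `V = (K²)^{⊗n}` (sites indexed by `Fin n`, basis of `V`
indexed by `Fin n → Fin 2`). -/
def Laux {K : Type*} [Field K] (n : ℕ) (q η : K) (i : Fin n) :
    Matrix (Fin 2 × (Fin n → Fin 2)) (Fin 2 × (Fin n → Fin 2)) K :=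
  Matrix.of fun p r =>
    if ∀ j, j ≠ i → p.2 j = r.2 j then sixvE q η p.1 (p.2 i) r.1 (r.2 i) else 0

/-- The monodromy matrix `T_a(ζ) = L°_{a,n}(ζ/ξ_n) ⋯ L°_{a,1}(ζ/ξ₁)`. -/
def mono {K : Type*} [Field K] (n : ℕ) (q ζ : K) (ξ : Fin n → K) :
    Matrix (Fin 2 × (Fin n → Fin 2)) (Fin 2 × (Fin n → Fin 2)) K :=
  (((List.finRange n).reverse).map (fun i => Laux n q (ζ / ξ i) i)).prod

/-- `diag(w, w⁻¹)` on the auxiliary space, tensored with `X` on `V`. -/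
def auxTwist {K : Type*} [Field K] (n : ℕ) (w : K)
    (X : Matrix (Fin n → Fin 2) (Fin n → Fin 2) K) :
    Matrix (Fin 2 × (Fin n → Fin 2)) (Fin 2 × (Fin n → Fin 2)) K :=
  Matrix.of fun p r =>
    if p.1 = r.1 then (if p.1 = 0 then w else w⁻¹) * X p.2 r.2 else 0

/-- Partial trace over the auxiliary space. -/
def ptr {K : Type*} [Field K] (n : ℕ)
    (M : Matrix (Fin 2 × (Fin n → Fin 2)) (Fin 2 × (Fin n → Fin 2)) K) :
    Matrix (Fin n → Fin 2) (Fin n → Fin 2) K :=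
  Matrix.of fun s s' => ∑ ε : Fin 2, M (ε, s) (ε, s')

/-- The twisted transfer matrix
`𝐭*(ζ)(X) = Tr_a[ T_a(ζ)·(diag(w,w⁻¹)_a ⊗ X)·T_a(ζ)⁻¹ ]`. -/
def ttm {K : Type*} [Field K] (n : ℕ) (q ζ w : K) (ξ : Fin n → K)
    (X : Matrix (Fin n → Fin 2) (Fin n → Fin 2) K) :
    Matrix (Fin n → Fin 2) (Fin n → Fin 2) K :=
  ptr n (mono n q ζ ξ * auxTwist n w X * (mono n q ζ ξ)⁻¹)

/-- `diag(w,w⁻¹)₁ ⊗ X`: the quasi-local operator on `(K²)^{⊗(n+1)}` which acts by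
`diag(w,w⁻¹)` on the first site and by `X` on the remaining `n` sites. -/
def embTail {K : Type*} [Field K] (n : ℕ) (w : K)
    (X : Matrix (Fin n → Fin 2) (Fin n → Fin 2) K) :
    Matrix (Fin (n + 1) → Fin 2) (Fin (n + 1) → Fin 2) K :=
  Matrix.of fun s s' =>
    if s 0 = s' 0 then
      (if s 0 = 0 then w else w⁻¹) * X (fun i => s i.succ) (fun i => s' i.succ)
    else 0

namespace TTMRed

open Kronecker

variable {K : Type*} [Field K]

def f2 (w : K) (ε : Fin 2) : K := if ε = 0 then w else w⁻¹

def e1 (n : ℕ) : (Fin 2 × (Fin (n+1) → Fin 2)) ≃ ((Fin 2 × (Fin n → Fin 2)) × Fin 2) where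
  toFun p := ((p.1, Fin.tail p.2), p.2 0)
  invFun p := (p.1.1, Fin.cons p.2 p.1.2)
  left_inv p := by simp [Fin.cons_self_tail]
  right_inv p := by simp

def e2 (n : ℕ) : (Fin 2 × (Fin (n+1) → Fin 2)) ≃ ((Fin 2 × Fin 2) × (Fin n → Fin 2)) where
  toFun p := ((p.1, p.2 0), Fin.tail p.2)
  invFun p := (p.1.1, Fin.cons p.1.2 p.2)
  left_inv p := by simp [Fin.cons_self_tail]
  right_inv p := by simp

def E1 {n : ℕ} (M : Matrix (Fin 2 × (Fin n → Fin 2)) (Fin 2 × (Fin n → Fin 2)) K) :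
    Matrix (Fin 2 × (Fin (n+1) → Fin 2)) (Fin 2 × (Fin (n+1) → Fin 2)) K :=
  (M ⊗ₖ (1 : Matrix (Fin 2) (Fin 2) K)).submatrix (e1 n) (e1 n)

def K2 {n : ℕ} (M : Matrix (Fin 2 × Fin 2) (Fin 2 × Fin 2) K)
    (N : Matrix (Fin n → Fin 2) (Fin n → Fin 2) K) :
    Matrix (Fin 2 × (Fin (n+1) → Fin 2)) (Fin 2 × (Fin (n+1) → Fin 2)) K :=
  (M ⊗ₖ N).submatrix (e2 n) (e2 n)

theorem E1_apply {n : ℕ} (M : Matrix (Fin 2 × (Fin n → Fin 2)) (Fin 2 × (Fin n → Fin 2)) K)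
    (p r : Fin 2 × (Fin (n+1) → Fin 2)) :
    E1 M p r = M (p.1, Fin.tail p.2) (r.1, Fin.tail r.2) * (if p.2 0 = r.2 0 then 1 else 0) := by
  simp [E1, e1, Matrix.one_apply]

theorem K2_apply {n : ℕ} (M : Matrix (Fin 2 × Fin 2) (Fin 2 × Fin 2) K)
    (N : Matrix (Fin n → Fin 2) (Fin n → Fin 2) K) (p r : Fin 2 × (Fin (n+1) → Fin 2)) :
    K2 M N p r = M (p.1, p.2 0) (r.1, r.2 0) * N (Fin.tail p.2) (Fin.tail r.2) := by
  simp [K2, e2]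

theorem E1_mul {n : ℕ} (M M' : Matrix (Fin 2 × (Fin n → Fin 2)) (Fin 2 × (Fin n → Fin 2)) K) :
    E1 M * E1 M' = E1 (M * M') := by
  rw [E1, E1, E1, Matrix.submatrix_mul_equiv, ← Matrix.mul_kronecker_mul, one_mul]

theorem E1_one {n : ℕ} : E1 (1 : Matrix (Fin 2 × (Fin n → Fin 2)) (Fin 2 × (Fin n → Fin 2)) K) = 1 := by
  rw [E1, Matrix.one_kronecker_one, Matrix.submatrix_one_equiv]

theorem E1_zero {n : ℕ} : E1 (0 : Matrix (Fin 2 × (Fin n → Fin 2)) (Fin 2 × (Fin n → Fin 2)) K) = 0 := by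
  rw [E1, Matrix.zero_kronecker]; rfl

theorem K2_mul {n : ℕ} (M M' : Matrix (Fin 2 × Fin 2) (Fin 2 × Fin 2) K)
    (N N' : Matrix (Fin n → Fin 2) (Fin n → Fin 2) K) :
    K2 M N * K2 M' N' = K2 (M * M') (N * N') := by
  rw [K2, K2, K2, Matrix.submatrix_mul_equiv, ← Matrix.mul_kronecker_mul]

theorem K2_one {n : ℕ} : K2 (1 : Matrix (Fin 2 × Fin 2) (Fin 2 × Fin 2) K)
    (1 : Matrix (Fin n → Fin 2) (Fin n → Fin 2) K) = 1 := by
  rw [K2, Matrix.one_kronecker_one, Matrix.submatrix_one_equiv]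

def E1hom (n : ℕ) : Matrix (Fin 2 × (Fin n → Fin 2)) (Fin 2 × (Fin n → Fin 2)) K →*
    Matrix (Fin 2 × (Fin (n+1) → Fin 2)) (Fin 2 × (Fin (n+1) → Fin 2)) K where
  toFun := E1
  map_one' := E1_one
  map_mul' M M' := (E1_mul M M').symm

theorem E1_det {n : ℕ} (M : Matrix (Fin 2 × (Fin n → Fin 2)) (Fin 2 × (Fin n → Fin 2)) K) :
    (E1 M).det = M.det ^ 2 := by
  rw [E1, Matrix.det_submatrix_equiv_self, Matrix.det_kronecker, Matrix.det_one, one_pow,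
    mul_one, Fintype.card_fin]

theorem E1_inv {n : ℕ} (M : Matrix (Fin 2 × (Fin n → Fin 2)) (Fin 2 × (Fin n → Fin 2)) K) :
    (E1 M)⁻¹ = E1 M⁻¹ := by
  by_cases h : IsUnit M.det
  · apply Matrix.inv_eq_right_inv
    rw [E1_mul, Matrix.mul_nonsing_inv M h, E1_one]
  · rw [Matrix.nonsing_inv_apply_not_isUnit M h, Matrix.nonsing_inv_apply_not_isUnit, E1_zero]
    rw [E1_det]
    intro hu
    exact h (isUnit_of_mul_isUnit_left (by rwa [← sq]))

/-- 4×4 six-vertex matrix on aux ⊗ one site. -/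
def Ltil (q η : K) : Matrix (Fin 2 × Fin 2) (Fin 2 × Fin 2) K :=
  Matrix.of fun p r => sixvE q η p.1 p.2 r.1 r.2

/-- Generic six-vertex-shaped 4×4 matrix. -/
def genL (b g : K) : Matrix (Fin 2 × Fin 2) (Fin 2 × Fin 2) K :=
  Matrix.of fun p r =>
    if p = r then (if p.1 = p.2 then 1 else b) else if p = (r.2, r.1) then g else 0

/-- Diagonal twist on aux ⊗ site. -/
def Dtil (w : K) : Matrix (Fin 2 × Fin 2) (Fin 2 × Fin 2) K :=
  Matrix.diagonal (fun p => f2 w p.1 * f2 w p.2)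

theorem Ltil_eq (q η : K) :
    Ltil q η = genL ((η - η⁻¹) / (q * η - q⁻¹ * η⁻¹)) ((q - q⁻¹) / (q * η - q⁻¹ * η⁻¹)) := by
  ext p r
  obtain ⟨a, b⟩ := p
  obtain ⟨c, d⟩ := r
  fin_cases a <;> fin_cases b <;> fin_cases c <;> fin_cases d <;>
    simp [Ltil, genL, sixvE, Prod.ext_iff]

theorem genL_mul_inv (b g : K) (hδ : b ^ 2 - g ^ 2 ≠ 0) :
    genL b g * genL (b * (b ^ 2 - g ^ 2)⁻¹) (-(g * (b ^ 2 - g ^ 2)⁻¹)) = 1 := by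
  ext p r
  rw [Matrix.mul_apply, Fintype.sum_prod_type]
  simp only [Fin.sum_univ_two]
  obtain ⟨a, b'⟩ := p
  obtain ⟨c, d⟩ := r
  fin_cases a <;> fin_cases b' <;> fin_cases c <;> fin_cases d <;>
    simp [genL, Matrix.one_apply, Prod.ext_iff] <;> field_simp <;> ring

theorem genL_comm_Dtil (b g w : K) : genL b g * Dtil w = Dtil w * genL b g := by
  ext p r
  rw [Dtil, Matrix.mul_diagonal, Matrix.diagonal_mul]
  obtain ⟨a, b'⟩ := p
  obtain ⟨c, d⟩ := r
  fin_cases a <;> fin_cases b' <;> fin_cases c <;> fin_cases d <;>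
    simp [genL, f2, Prod.ext_iff] <;> ring

section nonzero
variable {q η : K} (hq : q ≠ 0) (hη : η ≠ 0)
  (h1 : η ^ 2 ≠ q ^ 2) (h2 : η ^ 2 ≠ (q ^ 2)⁻¹)

include hq hη h2 in
theorem hd_ne : q * η - q⁻¹ * η⁻¹ ≠ 0 := by
  intro h
  apply h2
  have hz : q * η = q⁻¹ * η⁻¹ := sub_eq_zero.mp h
  field_simp at hz
  exact eq_inv_of_mul_eq_one_left (by linear_combination hz)

include hq hη h1 h2 in
theorem hdelta_ne :
    ((η - η⁻¹) / (q * η - q⁻¹ * η⁻¹)) ^ 2 - ((q - q⁻¹) / (q * η - q⁻¹ * η⁻¹)) ^ 2 ≠ 0 := by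
  have hd := hd_ne hq hη h2
  intro h
  have h1' : η ^ 2 - q ^ 2 ≠ 0 := sub_ne_zero.mpr h1
  have h2' : q ^ 2 * η ^ 2 - 1 ≠ 0 := by
    intro hz
    exact h2 (eq_inv_of_mul_eq_one_left (by linear_combination hz))
  apply mul_ne_zero h1' h2'
  rw [div_pow, div_pow, div_sub_div_same, div_eq_zero_iff] at h
  rcases h with h | h
  · have key : (η - η⁻¹) ^ 2 = (q - q⁻¹) ^ 2 := by linear_combination h
    field_simp at key
    linear_combination key
  · exact absurd h (pow_ne_zero 2 hd)

end nonzero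

theorem tail_def {n : ℕ} (s : Fin (n+1) → Fin 2) : Fin.tail s = fun i => s i.succ := rfl

theorem cond_succ {n : ℕ} (i : Fin n) (s t : Fin (n+1) → Fin 2) :
    (∀ j, j ≠ i.succ → s j = t j) ↔
      ((∀ j : Fin n, j ≠ i → Fin.tail s j = Fin.tail t j) ∧ s 0 = t 0) := by
  constructor
  · intro h
    exact ⟨fun j hj => h j.succ (by simpa using hj), h 0 (Fin.succ_ne_zero i).symm⟩
  · rintro ⟨h, h0⟩ j hj
    rcases Fin.eq_zero_or_eq_succ j with rfl | ⟨k, rfl⟩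
    · exact h0
    · exact h k fun hk => hj (by rw [hk])

theorem cond_zero {n : ℕ} (s t : Fin (n+1) → Fin 2) :
    (∀ j, j ≠ (0 : Fin (n+1)) → s j = t j) ↔ Fin.tail s = Fin.tail t := by
  constructor
  · intro h
    funext k
    exact h k.succ (Fin.succ_ne_zero k)
  · intro h j hj
    rcases Fin.eq_zero_or_eq_succ j with rfl | ⟨k, rfl⟩
    · exact absurd rfl hj
    · exact congrFun h k

theorem Laux_succ {n : ℕ} (q η : K) (i : Fin n) :
    Laux (n+1) q η i.succ = E1 (Laux n q η i) := by
  ext p r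
  rw [E1_apply]
  show (if _ then _ else _) = (if _ then _ else _) * _
  by_cases h0 : p.2 0 = r.2 0
  · by_cases h1 : ∀ j : Fin n, j ≠ i → Fin.tail p.2 j = Fin.tail r.2 j
    · rw [if_pos ((cond_succ i p.2 r.2).mpr ⟨h1, h0⟩), if_pos h1, if_pos h0, mul_one]
      rfl
    · rw [if_neg fun h => h1 ((cond_succ i p.2 r.2).mp h).1, if_neg h1, zero_mul]
  · rw [if_neg fun h => h0 ((cond_succ i p.2 r.2).mp h).2, if_neg h0, mul_zero]

theorem Laux_zero {n : ℕ} (q η : K) :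
    Laux (n+1) q η (0 : Fin (n+1)) = K2 (Ltil q η) (1 : Matrix (Fin n → Fin 2) (Fin n → Fin 2) K) := by
  ext p r
  rw [K2_apply]
  show (if _ then _ else _) = _ * _
  rw [Matrix.one_apply]
  by_cases h : Fin.tail p.2 = Fin.tail r.2
  · rw [if_pos ((cond_zero p.2 r.2).mpr h), if_pos h, mul_one]
    rfl
  · rw [if_neg fun hh => h ((cond_zero p.2 r.2).mp hh), if_neg h, mul_zero]

def G (n : ℕ) (w : K) : Matrix (Fin 2 × (Fin (n+1) → Fin 2)) (Fin 2 × (Fin (n+1) → Fin 2)) K :=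
  Matrix.diagonal (fun p => f2 w (p.2 0))

theorem auxTwist_eq {n : ℕ} (w : K) (X : Matrix (Fin n → Fin 2) (Fin n → Fin 2) K) :
    auxTwist (n+1) w (embTail n w X) = K2 (Dtil w) X := by
  ext p r
  rw [K2_apply]
  show (if _ then _ else _) = _
  simp only [Dtil, Matrix.diagonal_apply, embTail, Matrix.of_apply, f2, Prod.ext_iff]
  by_cases ha : p.1 = r.1 <;> by_cases hb : p.2 0 = r.2 0 <;>
    simp [ha, hb, tail_def] <;> split_ifs <;> ring

theorem K2_Dtil_eq {n : ℕ} (w : K) (X : Matrix (Fin n → Fin 2) (Fin n → Fin 2) K) :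
    K2 (Dtil w) X = G n w * E1 (auxTwist n w X) := by
  ext p r
  rw [K2_apply, G, Matrix.diagonal_mul, E1_apply]
  simp only [Dtil, Matrix.diagonal_apply, auxTwist, Matrix.of_apply, f2, Prod.ext_iff]
  by_cases ha : p.1 = r.1 <;> by_cases hb : p.2 0 = r.2 0 <;>
    simp [ha, hb, tail_def] <;> split_ifs <;> ring

theorem G_comm {n : ℕ} (w : K) (M : Matrix (Fin 2 × (Fin n → Fin 2)) (Fin 2 × (Fin n → Fin 2)) K) :
    E1 M * G n w = G n w * E1 M := by
  ext p r
  rw [G, Matrix.mul_diagonal, Matrix.diagonal_mul, E1_apply]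
  by_cases h : p.2 0 = r.2 0
  · rw [h]; ring
  · simp [if_neg h]

theorem ptr_G {n : ℕ} (w : K) (M : Matrix (Fin 2 × (Fin n → Fin 2)) (Fin 2 × (Fin n → Fin 2)) K) :
    ptr (n+1) (G n w * E1 M) = embTail n w (ptr n M) := by
  ext s s'
  show (∑ ε : Fin 2, (G n w * E1 M) (ε, s) (ε, s'))
      = (if s 0 = s' 0 then
          (if s 0 = 0 then w else w⁻¹) *
            ptr n M (fun i => s i.succ) (fun i => s' i.succ) else 0)
  simp only [G, Matrix.diagonal_mul, E1_apply]
  by_cases h : s 0 = s' 0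
  · simp [h, ptr, f2, Finset.mul_sum, tail_def]
    split_ifs <;> ring
  · simp [h]

theorem mono_succ (n : ℕ) (q ζ : K) (ξ : Fin (n+1) → K) :
    mono (n+1) q ζ ξ
      = E1 (mono n q ζ (fun i => ξ i.succ)) * Laux (n+1) q (ζ / ξ 0) 0 := by
  rw [mono, List.finRange_succ, List.reverse_cons, List.map_append, List.prod_append]
  congr 1
  · rw [← List.map_reverse, List.map_map]
    have hfun : ((fun i => Laux (n+1) q (ζ / ξ i) i) ∘ Fin.succ)
        = (fun i : Fin n => (E1hom n) (Laux n q (ζ / ξ i.succ) i)) := by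
      funext i
      exact Laux_succ q (ζ / ξ i.succ) i
    rw [hfun]
    rw [show (fun i : Fin n => (E1hom n) (Laux n q (ζ / ξ i.succ) i))
        = ⇑(E1hom n) ∘ (fun i : Fin n => Laux n q (ζ / ξ i.succ) i) from rfl,
      ← List.map_map, List.prod_hom _ (E1hom (K := K) n)]
    rfl
  · simp

end TTMRed

open TTMRed

/-- Left reduction relation for the twisted transfer matrix: on a chain with `n+1 ≥ 2`
sites, `𝐭*(ζ)(diag(w,w⁻¹)₁ ⊗ X) = diag(w,w⁻¹)₁ ⊗ 𝐭*'(ζ)(X)`, where `𝐭*'` is the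
twisted transfer matrix on the last `n` sites (inhomogeneities `ξ₂, …, ξ_{n+1}`). -/
theorem ttm_left_reduction {K : Type*} [Field K] (n : ℕ) (hn : 1 ≤ n)
    (q w ζ : K) (hq : q ≠ 0) (hq2 : q ^ 2 ≠ 1) (hw : w ≠ 0) (hζ : ζ ≠ 0)
    (ξ : Fin (n + 1) → K) (hξ : ∀ i, ξ i ≠ 0)
    (hr : ∀ i, (ζ / ξ i) ^ 2 ≠ q ^ 2 ∧ (ζ / ξ i) ^ 2 ≠ (q ^ 2)⁻¹)
    (X : Matrix (Fin n → Fin 2) (Fin n → Fin 2) K) :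
    ttm (n + 1) q ζ w ξ (embTail n w X)
      = embTail n w (ttm n q ζ w (fun i => ξ i.succ) X) := by
  have hη : ζ / ξ 0 ≠ 0 := div_ne_zero hζ (hξ 0)
  obtain ⟨ha, hb⟩ := hr 0
  set η : K := ζ / ξ 0 with hηdef
  set b : K := (η - η⁻¹) / (q * η - q⁻¹ * η⁻¹) with hbdef
  set g : K := (q - q⁻¹) / (q * η - q⁻¹ * η⁻¹) with hgdef
  have hδ : b ^ 2 - g ^ 2 ≠ 0 := hdelta_ne hq hη ha hb
  set T : Matrix (Fin 2 × (Fin n → Fin 2)) (Fin 2 × (Fin n → Fin 2)) K :=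
    mono n q ζ (fun i => ξ i.succ) with hTdef
  set bi : K := b * (b ^ 2 - g ^ 2)⁻¹
  set gi : K := -(g * (b ^ 2 - g ^ 2)⁻¹)
  have hL : Laux (n+1) q η 0
      = K2 (genL b g) (1 : Matrix (Fin n → Fin 2) (Fin n → Fin 2) K) := by
    rw [Laux_zero, Ltil_eq]
  have m2 : K2 (genL b g) (1 : Matrix (Fin n → Fin 2) (Fin n → Fin 2) K)
      * K2 (genL bi gi) (1 : Matrix (Fin n → Fin 2) (Fin n → Fin 2) K) = 1 := by
    rw [K2_mul, genL_mul_inv b g hδ, one_mul, K2_one]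
  have hLinv : (Laux (n+1) q η 0)⁻¹
      = K2 (genL bi gi) (1 : Matrix (Fin n → Fin 2) (Fin n → Fin 2) K) := by
    apply Matrix.inv_eq_right_inv
    rw [hL]
    exact m2
  rw [ttm, mono_succ, Matrix.mul_inv_rev, E1_inv, hLinv, ← hηdef, ← hTdef, hL, auxTwist_eq]
  have m1 : K2 (genL b g) (1 : Matrix (Fin n → Fin 2) (Fin n → Fin 2) K) * K2 (Dtil w) X
      = K2 (Dtil w) X * K2 (genL b g) (1 : Matrix (Fin n → Fin 2) (Fin n → Fin 2) K) := by
    rw [K2_mul, K2_mul, genL_comm_Dtil, one_mul, mul_one]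
  have key : E1 T * K2 (genL b g) 1 * K2 (Dtil w) X * (K2 (genL bi gi) 1 * E1 T⁻¹)
      = G n w * E1 (T * auxTwist n w X * T⁻¹) := by
    calc E1 T * K2 (genL b g) 1 * K2 (Dtil w) X * (K2 (genL bi gi) 1 * E1 T⁻¹)
        = E1 T * ((K2 (genL b g) 1 * K2 (Dtil w) X) * (K2 (genL bi gi) 1 * E1 T⁻¹)) := by
          simp only [mul_assoc]
      _ = E1 T * (K2 (Dtil w) X * ((K2 (genL b g) 1 * K2 (genL bi gi) 1) * E1 T⁻¹)) := by
          rw [m1]; simp only [mul_assoc]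
      _ = E1 T * (K2 (Dtil w) X * E1 T⁻¹) := by rw [m2, one_mul]
      _ = E1 T * (G n w * E1 (auxTwist n w X)) * E1 T⁻¹ := by
          rw [K2_Dtil_eq]; simp only [mul_assoc]
      _ = G n w * (E1 T * (E1 (auxTwist n w X) * E1 T⁻¹)) := by
          rw [← mul_assoc (E1 T) (G n w), G_comm]; simp only [mul_assoc]
      _ = G n w * E1 (T * auxTwist n w X * T⁻¹) := by
          rw [E1_mul, E1_mul, mul_assoc]
  rw [key, ptr_G]
  rfl
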